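/- arXiv:math/0702008 — 2 statements merged into one kernel-verified Lean document; each statement's English description precedes it below -/
import Mathlib

section
/- If h : ℝ → ℝ is bounded and measurable, then the solution y of the Stein equation satisfies sup_{x∈ℝ} |x·y(x)| ≤ 2(1−ψ)⁻¹·‖h‖_∞. -/
open MeasureTheory ProbabilityTheory Real Set Filter Topology

noncomputable section

/-- `h̄_ψ = E h(N)` for `N ~ N(0, (1-ψ)⁻¹)`. -/
def gaussMean (ψ : ℝ) (h : ℝ → ℝ) : ℝ :=
  ∫ x, h x ∂(gaussianReal 0 (Real.toNNReal (1 - ψ)⁻¹))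

/-- The bounded solution `y` of the Stein equation
`y'(x) - (1-ψ) x y(x) = h(x) - h̄_ψ`, given explicitly by
`y(x) = -e^{(1-ψ)x²/2} ∫_x^∞ e^{-(1-ψ)t²/2} (h(t) - h̄_ψ) dt`. -/
def steinSol (ψ : ℝ) (h : ℝ → ℝ) (x : ℝ) : ℝ :=
  - Real.exp ((1 - ψ) * x ^ 2 / 2) *
      ∫ t in Set.Ioi x, Real.exp (-((1 - ψ) * t ^ 2 / 2)) * (h t - gaussMean ψ h)

private lemma expShape (a t : ℝ) : -(a/2) * t ^ 2 = -(a * t ^ 2 / 2) := by ring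

private lemma expInt {a : ℝ} (ha : 0 < a) :
    Integrable (fun t : ℝ => Real.exp (-(a * t ^ 2 / 2))) := by
  refine (integrable_exp_neg_mul_sq (half_pos ha)).congr (ae_of_all _ fun t => ?_)
  simp only [expShape]

private lemma sqTendstoTop (a : ℝ) (ha : 0 < a) :
    Tendsto (fun t : ℝ => a * t ^ 2 / 2) atTop atTop :=
  (((tendsto_pow_atTop (two_ne_zero)).const_mul_atTop ha).atTop_div_const two_pos)

private lemma sqTendstoTop' (a : ℝ) (ha : 0 < a) :
    Tendsto (fun t : ℝ => a * t ^ 2 / 2) atBot atTop := by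
  have := (sqTendstoTop a ha).comp tendsto_neg_atBot_atTop
  refine this.congr fun t => ?_
  simp [Function.comp, neg_pow]

private lemma negSqDeriv (a t : ℝ) : HasDerivAt (fun t : ℝ => -(a * t ^ 2 / 2)) (-(a * t)) t := by
  have := (((hasDerivAt_pow 2 t).const_mul a).div_const 2).fun_neg
  refine this.congr_deriv ?_
  ring

private lemma expDeriv (a t : ℝ) (ha : 0 < a) :
    HasDerivAt (fun t : ℝ => -Real.exp (-(a * t ^ 2 / 2)) / a)
      (t * Real.exp (-(a * t ^ 2 / 2))) t := by
  have h2 := ((negSqDeriv a t).exp.fun_neg).div_const a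
  refine h2.congr_deriv ?_
  field_simp

private lemma expDeriv' (a t : ℝ) (ha : 0 < a) :
    HasDerivAt (fun t : ℝ => Real.exp (-(a * t ^ 2 / 2)) / a)
      (-t * Real.exp (-(a * t ^ 2 / 2))) t := by
  have h2 := (negSqDeriv a t).exp.div_const a
  refine h2.congr_deriv ?_
  field_simp

private lemma tMulExpInt {a : ℝ} (ha : 0 < a) :
    Integrable (fun t : ℝ => t * Real.exp (-(a * t ^ 2 / 2))) := by
  refine (integrable_mul_exp_neg_mul_sq (half_pos ha)).congr (ae_of_all _ fun t => ?_)
  simp only [expShape]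

private lemma tailIoi (a x : ℝ) (ha : 0 < a) :
    ∫ t in Ioi x, t * Real.exp (-(a * t ^ 2 / 2)) = Real.exp (-(a * x ^ 2 / 2)) / a := by
  have htend : Tendsto (fun t : ℝ => -Real.exp (-(a * t ^ 2 / 2)) / a) atTop (𝓝 0) := by
    have h1 : Tendsto (fun t : ℝ => Real.exp (-(a * t ^ 2 / 2))) atTop (𝓝 0) :=
      Real.tendsto_exp_atBot.comp (tendsto_neg_atBot_iff.mpr (sqTendstoTop a ha))
    simpa using (h1.neg).div_const a
  have := integral_Ioi_of_hasDerivAt_of_tendsto' (a := x) (fun t _ => expDeriv a t ha)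
    (tMulExpInt ha).integrableOn htend
  rw [this]
  ring

private lemma tailIic (a x : ℝ) (ha : 0 < a) :
    ∫ t in Iic x, -t * Real.exp (-(a * t ^ 2 / 2)) = Real.exp (-(a * x ^ 2 / 2)) / a := by
  have htend : Tendsto (fun t : ℝ => Real.exp (-(a * t ^ 2 / 2)) / a) atBot (𝓝 0) := by
    have h1 : Tendsto (fun t : ℝ => Real.exp (-(a * t ^ 2 / 2))) atBot (𝓝 0) :=
      Real.tendsto_exp_atBot.comp (tendsto_neg_atBot_iff.mpr (sqTendstoTop' a ha))
    simpa using h1.div_const a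
  have hint : IntegrableOn (fun t : ℝ => -t * Real.exp (-(a * t ^ 2 / 2))) (Iic x) := by
    refine (((tMulExpInt ha).neg).congr (ae_of_all _ fun t => ?_)).integrableOn
    simp only [Pi.neg_apply]
    ring
  have := integral_Iic_of_hasDerivAt_of_tendsto' (a := x) (fun t _ => expDeriv' a t ha) hint htend
  rw [this]
  ring

theorem stmt11 (ψ : ℝ) (hψ0 : 0 ≤ ψ) (hψ1 : ψ < 1) (h : ℝ → ℝ) (hmeas : Measurable h) (C : ℝ) (hC : ∀ x, |h x| ≤ C) :
    ∀ x : ℝ, |x * steinSol ψ h x| ≤ 2 / (1 - ψ) * C := by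
  set a : ℝ := 1 - ψ with ha_def
  have ha : 0 < a := by simp only [ha_def]; linarith
  have hC0 : 0 ≤ C := le_trans (abs_nonneg _) (hC 0)
  set m : ℝ := gaussMean ψ h with hm_def
  set f : ℝ → ℝ := fun t => Real.exp (-(a * t ^ 2 / 2)) * (h t - m) with hf_def
  -- |m| ≤ C
  have hmabs : |m| ≤ C := by
    have := norm_integral_le_of_norm_le_const (μ := gaussianReal 0 (Real.toNNReal (1 - ψ)⁻¹))
      (f := h) (C := C) (ae_of_all _ fun t => by simpa using hC t)
    simpa [hm_def, gaussMean, Real.norm_eq_abs] using this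
  -- integrability of f
  have hfmeas : AEStronglyMeasurable f volume := by
    have : Measurable f := by fun_prop
    exact this.aestronglyMeasurable
  have hfbound : ∀ t, ‖f t‖ ≤ 2 * C * Real.exp (-(a * t ^ 2 / 2)) := by
    intro t
    have h1 : |h t - m| ≤ 2 * C := by
      calc |h t - m| ≤ |h t| + |m| := abs_sub _ _
        _ ≤ C + C := add_le_add (hC t) hmabs
        _ = 2 * C := by ring
    calc ‖f t‖ = Real.exp (-(a * t ^ 2 / 2)) * |h t - m| := by
          rw [Real.norm_eq_abs, abs_mul, abs_of_nonneg (Real.exp_pos _).le]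
      _ ≤ Real.exp (-(a * t ^ 2 / 2)) * (2 * C) :=
          mul_le_mul_of_nonneg_left h1 (Real.exp_pos _).le
      _ = 2 * C * Real.exp (-(a * t ^ 2 / 2)) := by ring
  have hfint : Integrable f :=
    (((expInt ha).const_mul (2 * C)).mono' hfmeas (ae_of_all _ hfbound))
  -- total integral is zero
  have htotal : ∫ t, f t = 0 := by
    set v : NNReal := Real.toNNReal (1 - ψ)⁻¹ with hv_def
    have hv : v ≠ 0 := by
      simp only [hv_def, ne_eq, ← NNReal.coe_eq_zero,
        Real.coe_toNNReal _ (inv_pos.mpr ha).le]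
      exact fun h0 => (inv_pos.mpr ha).ne' (by rw [← Real.coe_toNNReal _ (inv_pos.mpr ha).le]; exact h0)
    have hvr : (v : ℝ) = a⁻¹ := Real.coe_toNNReal _ (inv_pos.mpr ha).le
    set c : ℝ := Real.sqrt (2 * π * a⁻¹) with hc_def
    have hc : 0 < c := Real.sqrt_pos.mpr (by positivity)
    have hpdf : ∀ t, gaussianPDFReal 0 v t = c⁻¹ * Real.exp (-(a * t ^ 2 / 2)) := by
      intro t
      rw [gaussianPDFReal]
      congr 2
      · rw [hvr]
      · rw [hvr]
        field_simp
        ring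
    have hm2 : m = ∫ t, gaussianPDFReal 0 v t * h t := by
      rw [hm_def, gaussMean, gaussianReal_of_var_ne_zero 0 hv]
      have hrepr : gaussianPDF 0 v = fun x => ((Real.toNNReal (gaussianPDFReal 0 v x) : NNReal) : ENNReal) := rfl
      rw [hrepr, integral_withDensity_eq_integral_smul ((measurable_gaussianPDFReal 0 v).real_toNNReal)]
      refine integral_congr_ae (ae_of_all _ fun t => ?_)
      simp [NNReal.smul_def, Real.coe_toNNReal _ (gaussianPDFReal_nonneg 0 v t)]
    have hintH : Integrable (fun t : ℝ => Real.exp (-(a * t ^ 2 / 2)) * h t) := by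
      have hmeas2 : Measurable (fun t : ℝ => Real.exp (-(a * t ^ 2 / 2)) * h t) := by fun_prop
      refine ((expInt ha).const_mul C).mono' hmeas2.aestronglyMeasurable (ae_of_all _ fun t => ?_)
      calc ‖Real.exp (-(a * t ^ 2 / 2)) * h t‖ = Real.exp (-(a * t ^ 2 / 2)) * |h t| := by
            rw [Real.norm_eq_abs, abs_mul, abs_of_nonneg (Real.exp_pos _).le]
        _ ≤ Real.exp (-(a * t ^ 2 / 2)) * C := mul_le_mul_of_nonneg_left (hC t) (Real.exp_pos _).le
        _ = C * Real.exp (-(a * t ^ 2 / 2)) := by ring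
    have hIexp : ∫ t : ℝ, Real.exp (-(a * t ^ 2 / 2)) = c := by
      have := integral_gaussian (a / 2)
      have heq : (fun t : ℝ => Real.exp (-(a / 2) * t ^ 2)) = fun t : ℝ => Real.exp (-(a * t ^ 2 / 2)) := by
        funext t; rw [expShape]
      rw [heq] at this
      rw [this, hc_def]
      congr 1
      field_simp
    have hmc : ∫ t : ℝ, Real.exp (-(a * t ^ 2 / 2)) * h t = c * m := by
      have : m = c⁻¹ * ∫ t : ℝ, Real.exp (-(a * t ^ 2 / 2)) * h t := by
        rw [hm2]
        rw [← integral_const_mul _ _]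
        refine integral_congr_ae (ae_of_all _ fun t => ?_)
        simp only [hpdf]; ring
      rw [this]
      field_simp
    have hsplit : ∫ t, f t = (∫ t : ℝ, Real.exp (-(a * t ^ 2 / 2)) * h t)
        - ∫ t : ℝ, Real.exp (-(a * t ^ 2 / 2)) * m := by
      rw [← integral_sub hintH ((expInt ha).mul_const m)]
      refine integral_congr_ae (ae_of_all _ fun t => ?_)
      simp only [hf_def]; ring
    rw [hsplit, hmc, integral_mul_const _ _, hIexp]
    ring
  -- main estimate
  intro x
  have hEpos : (0:ℝ) < Real.exp (a * x ^ 2 / 2) := Real.exp_pos _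
  have hstein : steinSol ψ h x = -Real.exp (a * x ^ 2 / 2) * ∫ t in Ioi x, f t := rfl
  have hgoal : 2 / a * C = 2 * C / a := by ring
  rw [hgoal, hstein]
  have key : |x| * |∫ t in Ioi x, f t| ≤ 2 * C * Real.exp (-(a * x ^ 2 / 2)) / a := by
    rcases le_or_gt 0 x with hx | hx
    · -- x ≥ 0
      calc |x| * |∫ t in Ioi x, f t| ≤ |x| * ∫ t in Ioi x, 2 * C * Real.exp (-(a * t ^ 2 / 2)) := by
            refine mul_le_mul_of_nonneg_left ?_ (abs_nonneg x)
            refine (norm_integral_le_of_norm_le (((expInt ha).const_mul (2*C)).integrableOn)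
              (ae_of_all _ fun t => hfbound t)).trans_eq rfl
        _ = ∫ t in Ioi x, 2 * C * (x * Real.exp (-(a * t ^ 2 / 2))) := by
            rw [abs_of_nonneg hx, ← integral_const_mul _ _]
            refine integral_congr_ae (ae_of_all _ fun t => ?_); ring
        _ ≤ ∫ t in Ioi x, 2 * C * (t * Real.exp (-(a * t ^ 2 / 2))) := by
            refine setIntegral_mono_on
              ((((expInt ha).const_mul x).const_mul (2*C)).integrableOn.congr
                (ae_of_all _ fun t => by ring))
              (((tMulExpInt ha).const_mul (2*C)).integrableOn) measurableSet_Ioi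
              fun t ht => ?_
            have hxt : x ≤ t := le_of_lt ht
            have := mul_le_mul_of_nonneg_right hxt (Real.exp_pos (-(a * t ^ 2 / 2))).le
            nlinarith [this, hC0]
        _ = 2 * C * ∫ t in Ioi x, t * Real.exp (-(a * t ^ 2 / 2)) := by
            rw [← integral_const_mul _ _]
        _ = 2 * C * (Real.exp (-(a * x ^ 2 / 2)) / a) := by rw [tailIoi a x ha]
        _ = 2 * C * Real.exp (-(a * x ^ 2 / 2)) / a := by ring
    · -- x < 0
      have hflip : ∫ t in Ioi x, f t = - ∫ t in Iic x, f t := by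
        have := intervalIntegral.integral_Iic_add_Ioi (μ := volume) (b := x) hfint.integrableOn hfint.integrableOn
        rw [htotal] at this
        linarith
      rw [hflip, abs_neg]
      calc |x| * |∫ t in Iic x, f t| ≤ |x| * ∫ t in Iic x, 2 * C * Real.exp (-(a * t ^ 2 / 2)) := by
            refine mul_le_mul_of_nonneg_left ?_ (abs_nonneg x)
            exact (norm_integral_le_of_norm_le (((expInt ha).const_mul (2*C)).integrableOn)
              (ae_of_all _ fun t => hfbound t))
        _ = ∫ t in Iic x, 2 * C * (-x * Real.exp (-(a * t ^ 2 / 2))) := by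
            rw [abs_of_neg hx, ← integral_const_mul _ _]
            refine integral_congr_ae (ae_of_all _ fun t => ?_); ring
        _ ≤ ∫ t in Iic x, 2 * C * (-t * Real.exp (-(a * t ^ 2 / 2))) := by
            refine setIntegral_mono_on
              ((((expInt ha).const_mul (-x)).const_mul (2*C)).integrableOn.congr
                (ae_of_all _ fun t => by ring))
              (((tMulExpInt ha).neg.congr (ae_of_all _ fun t => by simp)).const_mul
                (2*C)).integrableOn measurableSet_Iic
              fun t ht => ?_
            have hxt : t ≤ x := ht
            have h2 : -x ≤ -t := by linarith
            have := mul_le_mul_of_nonneg_right h2 (Real.exp_pos (-(a * t ^ 2 / 2))).le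
            nlinarith [this, hC0]
        _ = 2 * C * ∫ t in Iic x, -t * Real.exp (-(a * t ^ 2 / 2)) := by
            rw [← integral_const_mul _ _]
        _ = 2 * C * (Real.exp (-(a * x ^ 2 / 2)) / a) := by rw [tailIic a x ha]
        _ = 2 * C * Real.exp (-(a * x ^ 2 / 2)) / a := by ring
  calc |x * (-Real.exp (a * x ^ 2 / 2) * ∫ t in Ioi x, f t)|
      = Real.exp (a * x ^ 2 / 2) * (|x| * |∫ t in Ioi x, f t|) := by
        rw [abs_mul, abs_mul, abs_neg, abs_of_pos hEpos]; ring
    _ ≤ Real.exp (a * x ^ 2 / 2) * (2 * C * Real.exp (-(a * x ^ 2 / 2)) / a) :=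
        mul_le_mul_of_nonneg_left key hEpos.le
    _ = 2 * C / a := by
        rw [Real.exp_neg]
        field_simp
  done

end
end

section
/- Let m > 0 and 0 < ψ < 1, and let f : ℝ → ℝ be bounded and measurable. Then the solution y of the Stein equation with h = f satisfies the perturbation bound sup_{x∈ℝ} | x · (ψ(m+1)/(m+x²)) · y(x) | ≤ 2ψ(1−ψ)⁻¹(1 + 1/m)·‖f‖_∞; i.e., with (U y)(x) := −x·(ψ(m+1)/(m+x²))·y(x), one has ‖U y‖_∞ ≤ 2ψ(1−ψ)⁻¹(1 + 1/m)·‖f‖_∞. -/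
open MeasureTheory ProbabilityTheory Real Set
open Filter
open scoped NNReal ENNReal

noncomputable section

namespace SteinAux

lemma hasDerivAt_F {a : ℝ} (ha : 0 < a) (t : ℝ) :
    HasDerivAt (fun t : ℝ => -Real.exp (-(a * t ^ 2 / 2)) / a)
      (t * Real.exp (-(a * t ^ 2 / 2))) t := by
  have h1 : HasDerivAt (fun t : ℝ => -(a * t ^ 2 / 2)) (-(a * t)) t := by
    have h := (((hasDerivAt_pow 2 t).const_mul a).div_const 2).neg
    refine h.congr_deriv ?_
    ring
  have h2 := (h1.exp.div_const a).neg
  have ha' : a ≠ 0 := ne_of_gt ha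
  refine (h2.congr_deriv ?_).congr_of_eventuallyEq (Filter.Eventually.of_forall fun x => ?_)
  · rw [mul_neg, neg_div, neg_neg, div_eq_iff ha']; ring
  · exact neg_div _ _

lemma exp_eq (a : ℝ) : (fun t : ℝ => Real.exp (-(a * t ^ 2 / 2)))
    = fun t => Real.exp (-(a / 2) * t ^ 2) := by
  funext t; congr 1; ring

lemma integrable_exp' {a : ℝ} (ha : 0 < a) :
    Integrable (fun t : ℝ => Real.exp (-(a * t ^ 2 / 2))) := by
  rw [exp_eq]; exact integrable_exp_neg_mul_sq (by linarith)

lemma integral_exp' {a : ℝ} (ha : 0 < a) :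
    ∫ t : ℝ, Real.exp (-(a * t ^ 2 / 2)) = Real.sqrt (2 * π * a⁻¹) := by
  rw [exp_eq, integral_gaussian]
  congr 1
  field_simp

lemma tendsto_F_top {a : ℝ} (ha : 0 < a) :
    Tendsto (fun t : ℝ => -Real.exp (-(a * t ^ 2 / 2)) / a) atTop (nhds 0) := by
  have h : Tendsto (fun t : ℝ => Real.exp (-(a * t ^ 2 / 2))) atTop (nhds 0) := by
    rw [Real.tendsto_exp_comp_nhds_zero]
    have h2 : Tendsto (fun t : ℝ => a / 2 * t ^ 2) atTop atTop :=
      (tendsto_pow_atTop two_ne_zero).const_mul_atTop (by linarith)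
    have h3 : Tendsto (fun t : ℝ => -(a / 2 * t ^ 2)) atTop atBot :=
      tendsto_neg_atBot_iff.mpr h2
    refine h3.congr fun t => by ring
  have := (h.neg).div_const a
  simpa using this

lemma integral_Ioi_texp {a : ℝ} (ha : 0 < a) {x : ℝ} (hx : 0 < x) :
    ∫ t in Ioi x, t * Real.exp (-(a * t ^ 2 / 2)) = Real.exp (-(a * x ^ 2 / 2)) / a := by
  have h := integral_Ioi_of_hasDerivAt_of_nonneg'
    (g := fun t : ℝ => -Real.exp (-(a * t ^ 2 / 2)) / a)
    (g' := fun t => t * Real.exp (-(a * t ^ 2 / 2)))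
    (fun t _ => hasDerivAt_F ha t)
    (fun t ht => by
      have : (0:ℝ) < t := lt_trans hx ht
      positivity)
    (tendsto_F_top ha)
  rw [h]
  ring

lemma integrableOn_Ioi_texp {a : ℝ} (ha : 0 < a) {x : ℝ} (hx : 0 < x) :
    IntegrableOn (fun t => t * Real.exp (-(a * t ^ 2 / 2))) (Ioi x) := by
  exact integrableOn_Ioi_deriv_of_nonneg'
    (fun t _ => hasDerivAt_F ha t)
    (fun t ht => by
      have : (0:ℝ) < t := lt_trans hx ht
      positivity)
    (tendsto_F_top ha)

lemma gauss_eq {a : ℝ} (ha : 0 < a) (f : ℝ → ℝ) :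
    ∫ x, f x ∂(gaussianReal 0 (Real.toNNReal a⁻¹)) =
      (Real.sqrt (2 * π * a⁻¹))⁻¹ * ∫ t, Real.exp (-(a * t ^ 2 / 2)) * f t := by
  have ha' : a ≠ 0 := ne_of_gt ha
  have hv : ((Real.toNNReal a⁻¹ : ℝ≥0) : ℝ) = a⁻¹ := Real.coe_toNNReal _ (inv_pos.mpr ha).le
  have hvne : Real.toNNReal a⁻¹ ≠ 0 := by
    simp only [ne_eq, Real.toNNReal_eq_zero, not_le]
    exact inv_pos.mpr ha
  rw [gaussianReal_of_var_ne_zero 0 hvne]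
  rw [show gaussianPDF 0 (Real.toNNReal a⁻¹)
      = fun x => ((Real.toNNReal (gaussianPDFReal 0 (Real.toNNReal a⁻¹) x)) : ℝ≥0∞) from rfl]
  rw [integral_withDensity_eq_integral_smul
      ((measurable_gaussianPDFReal 0 _).real_toNNReal) f]
  rw [← integral_const_mul]
  congr 1
  funext x
  rw [NNReal.smul_def, Real.coe_toNNReal _ (gaussianPDFReal_nonneg 0 _ x)]
  rw [gaussianPDFReal, hv]
  rw [show -(x - (0:ℝ)) ^ 2 / (2 * a⁻¹) = -(a * x ^ 2 / 2) by field_simp; ring]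
  rw [smul_eq_mul, mul_assoc]

lemma integrable_exp_mul {a : ℝ} (ha : 0 < a) {f : ℝ → ℝ} (hmeas : Measurable f) {C : ℝ}
    (hC : ∀ x, |f x| ≤ C) :
    Integrable (fun t => Real.exp (-(a * t ^ 2 / 2)) * f t) := by
  have h := (integrable_exp' ha).bdd_mul (c := C) hmeas.aestronglyMeasurable
    (ae_of_all _ fun x => by simpa using hC x)
  have he : (fun t => Real.exp (-(a * t ^ 2 / 2)) * f t)
      = fun x => f x * Real.exp (-(a * x ^ 2 / 2)) := by
    funext t; ring
  rw [he]; exact h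

lemma integrable_g {a : ℝ} (ha : 0 < a) {f : ℝ → ℝ} (hmeas : Measurable f) {C : ℝ}
    (hC : ∀ x, |f x| ≤ C) (M : ℝ) :
    Integrable (fun t => Real.exp (-(a * t ^ 2 / 2)) * (f t - M)) := by
  have hsplit : (fun t => Real.exp (-(a * t ^ 2 / 2)) * (f t - M))
      = fun t => Real.exp (-(a * t ^ 2 / 2)) * f t - Real.exp (-(a * t ^ 2 / 2)) * M := by
    funext t; ring
  rw [hsplit]
  exact (integrable_exp_mul ha hmeas hC).sub ((integrable_exp' ha).mul_const M)

lemma total_zero {a : ℝ} (ha : 0 < a) {f : ℝ → ℝ} (hmeas : Measurable f) {C : ℝ}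
    (hC : ∀ x, |f x| ≤ C) :
    ∫ t, Real.exp (-(a * t ^ 2 / 2)) *
      (f t - ∫ x, f x ∂(gaussianReal 0 (Real.toNNReal a⁻¹))) = 0 := by
  set M := ∫ x, f x ∂(gaussianReal 0 (Real.toNNReal a⁻¹)) with hM
  have hsplit : (fun t => Real.exp (-(a * t ^ 2 / 2)) * (f t - M))
      = fun t => Real.exp (-(a * t ^ 2 / 2)) * f t - Real.exp (-(a * t ^ 2 / 2)) * M := by
    funext t; ring
  rw [hsplit, integral_sub (integrable_exp_mul ha hmeas hC)
    ((integrable_exp' ha).mul_const M), integral_mul_const, integral_exp' ha]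
  have hK : (0:ℝ) < Real.sqrt (2 * π * a⁻¹) := Real.sqrt_pos.mpr (by positivity)
  have hg := gauss_eq ha f
  rw [← hM] at hg
  rw [hg]
  field_simp
  ring

lemma abs_integral_Ioi_le {a : ℝ} (ha : 0 < a) {x : ℝ} (hx : 0 < x) {g : ℝ → ℝ} {D : ℝ}
    (hD : 0 ≤ D) (hint : IntegrableOn g (Ioi x))
    (hg : ∀ t, |g t| ≤ D * Real.exp (-(a * t ^ 2 / 2))) :
    |∫ t in Ioi x, g t| ≤ D * Real.exp (-(a * x ^ 2 / 2)) / (a * x) := by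
  have h1 : |∫ t in Ioi x, g t| ≤ ∫ t in Ioi x, |g t| := by
    simpa using norm_integral_le_integral_norm (μ := volume.restrict (Ioi x)) g
  have htexp := integrableOn_Ioi_texp ha hx
  have h2 : ∫ t in Ioi x, |g t| ≤ ∫ t in Ioi x, D / x * (t * Real.exp (-(a * t ^ 2 / 2))) := by
    refine setIntegral_mono_on hint.abs (htexp.const_mul _) measurableSet_Ioi ?_
    intro t ht
    have hxt : x < t := ht
    have hE : (0:ℝ) < Real.exp (-(a * t ^ 2 / 2)) := Real.exp_pos _
    refine le_trans (hg t) ?_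
    rw [div_mul_eq_mul_div, le_div_iff₀ hx]
    nlinarith [mul_le_mul_of_nonneg_left hxt.le (mul_nonneg hD hE.le)]
  have h3 : ∫ t in Ioi x, D / x * (t * Real.exp (-(a * t ^ 2 / 2)))
      = D / x * (Real.exp (-(a * x ^ 2 / 2)) / a) := by
    rw [integral_const_mul, integral_Ioi_texp ha hx]
  have h4 : D / x * (Real.exp (-(a * x ^ 2 / 2)) / a)
      = D * Real.exp (-(a * x ^ 2 / 2)) / (a * x) := by
    rw [div_mul_div_comm, mul_comm x a]
  rw [h3, h4] at h2
  linarith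

lemma key {a : ℝ} (ha : 0 < a) {f : ℝ → ℝ} (hmeas : Measurable f) {C : ℝ}
    (hC : ∀ x, |f x| ≤ C) {x : ℝ} (hx : x ≠ 0) :
    |∫ t in Ioi x, Real.exp (-(a * t ^ 2 / 2)) *
        (f t - ∫ z, f z ∂(gaussianReal 0 (Real.toNNReal a⁻¹)))| ≤
      2 * C * Real.exp (-(a * x ^ 2 / 2)) / (a * |x|) := by
  set M := ∫ z, f z ∂(gaussianReal 0 (Real.toNNReal a⁻¹)) with hM
  set g : ℝ → ℝ := fun s => Real.exp (-(a * s ^ 2 / 2)) * (f s - M) with hgdef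
  have hC0 : 0 ≤ C := le_trans (abs_nonneg _) (hC 0)
  have hMle : |M| ≤ C := by
    have h := norm_integral_le_of_norm_le_const (μ := gaussianReal 0 (Real.toNNReal a⁻¹))
      (C := C) (f := f) (Filter.Eventually.of_forall fun z => by simpa using hC z)
    simpa [measure_univ] using h
  have hgbd : ∀ t, |g t| ≤ 2 * C * Real.exp (-(a * t ^ 2 / 2)) := by
    intro t
    rw [hgdef]
    simp only
    rw [abs_mul, abs_of_pos (Real.exp_pos _), mul_comm]
    refine mul_le_mul_of_nonneg_right ?_ (Real.exp_pos _).le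
    calc |f t - M| ≤ |f t| + |M| := abs_sub _ _
      _ ≤ C + C := add_le_add (hC t) hMle
      _ = 2 * C := by ring
  have Ig : Integrable g := integrable_g ha hmeas hC M
  rcases lt_or_gt_of_ne hx with hneg | hpos
  · have htot : ∫ t, g t = 0 := total_zero ha hmeas hC
    have hsum := intervalIntegral.integral_Iic_add_Ioi (b := x) (f := g) Ig.integrableOn Ig.integrableOn
    rw [htot] at hsum
    have hIoi_eq : ∫ t in Ioi x, g t = -∫ t in Iic x, g t := by linarith
    have hrefl : ∫ t in Ioi (-x), g (-t) = ∫ t in Iic x, g t := by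
      simpa using integral_comp_neg_Ioi (-x) g
    have Ig' : Integrable (fun t => g (-t)) := by
      have := ((Measure.measurePreserving_neg (volume : Measure ℝ)).integrable_comp_emb
        (Homeomorph.neg ℝ).isClosedEmbedding.measurableEmbedding).mpr Ig
      exact this
    have hb := abs_integral_Ioi_le ha (x := -x) (by linarith)
      (D := 2 * C) (by linarith) Ig'.integrableOn
      (fun t => by simpa [hgdef, neg_sq] using hgbd (-t))
    rw [hrefl] at hb
    rw [hIoi_eq, abs_neg]
    have hax : |x| = -x := abs_of_neg hneg
    rw [hax]
    simpa [neg_sq] using hb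
  · have hb := abs_integral_Ioi_le ha hpos (D := 2 * C) (by linarith) Ig.integrableOn hgbd
    rw [abs_of_pos hpos]
    exact hb

end SteinAux

theorem stmt16 (m ψ : ℝ) (hm : 0 < m) (hψ0 : 0 < ψ) (hψ1 : ψ < 1)
    (f : ℝ → ℝ) (hmeas : Measurable f) (C : ℝ) (hC : ∀ x, |f x| ≤ C) :
    ∀ x : ℝ,
      |x * (ψ * (m + 1) / (m + x ^ 2)) * steinSol ψ f x|
        ≤ 2 * ψ / (1 - ψ) * (1 + 1 / m) * C := by
  intro x
  have ha : (0:ℝ) < 1 - ψ := by linarith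
  have hC0 : 0 ≤ C := le_trans (abs_nonneg _) (hC 0)
  by_cases hx : x = 0
  · subst hx
    simp only [zero_mul, abs_zero]
    positivity
  · have hkey := SteinAux.key ha hmeas hC hx
    have hxabs : (0:ℝ) < |x| := abs_pos.mpr hx
    -- bound on steinSol
    have hy : |steinSol ψ f x| ≤ 2 * C / ((1 - ψ) * |x|) := by
      rw [steinSol, abs_mul, abs_neg, abs_of_pos (Real.exp_pos _)]
      have hEE : Real.exp ((1 - ψ) * x ^ 2 / 2) *
          Real.exp (-((1 - ψ) * x ^ 2 / 2)) = 1 := by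
        rw [← Real.exp_add]; simp
      calc Real.exp ((1 - ψ) * x ^ 2 / 2) *
            |∫ t in Set.Ioi x, Real.exp (-((1 - ψ) * t ^ 2 / 2)) * (f t - gaussMean ψ f)|
          ≤ Real.exp ((1 - ψ) * x ^ 2 / 2) *
            (2 * C * Real.exp (-((1 - ψ) * x ^ 2 / 2)) / ((1 - ψ) * |x|)) := by
            refine mul_le_mul_of_nonneg_left ?_ (Real.exp_pos _).le
            exact hkey
        _ = 2 * C / ((1 - ψ) * |x|) := by
            rw [show Real.exp ((1 - ψ) * x ^ 2 / 2) *
                (2 * C * Real.exp (-((1 - ψ) * x ^ 2 / 2)) / ((1 - ψ) * |x|))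
              = (Real.exp ((1 - ψ) * x ^ 2 / 2) * Real.exp (-((1 - ψ) * x ^ 2 / 2)))
                * (2 * C) / ((1 - ψ) * |x|) from by ring, hEE, one_mul]
    have hc : (0:ℝ) < ψ * (m + 1) / (m + x ^ 2) := by positivity
    have h1 : |x * (ψ * (m + 1) / (m + x ^ 2)) * steinSol ψ f x|
        = ψ * (m + 1) / (m + x ^ 2) * (|x| * |steinSol ψ f x|) := by
      rw [abs_mul, abs_mul, abs_of_pos hc]; ring
    have h2 : |x| * |steinSol ψ f x| ≤ 2 * C / (1 - ψ) := by
      calc |x| * |steinSol ψ f x| ≤ |x| * (2 * C / ((1 - ψ) * |x|)) :=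
            mul_le_mul_of_nonneg_left hy hxabs.le
        _ = 2 * C / (1 - ψ) := by
            field_simp
    have h3 : ψ * (m + 1) / (m + x ^ 2) ≤ ψ * (m + 1) / m :=
      div_le_div_of_nonneg_left (by positivity) hm (by nlinarith [sq_nonneg x])
    calc |x * (ψ * (m + 1) / (m + x ^ 2)) * steinSol ψ f x|
        = ψ * (m + 1) / (m + x ^ 2) * (|x| * |steinSol ψ f x|) := h1
      _ ≤ ψ * (m + 1) / (m + x ^ 2) * (2 * C / (1 - ψ)) :=
          mul_le_mul_of_nonneg_left h2 hc.le
      _ ≤ ψ * (m + 1) / m * (2 * C / (1 - ψ)) :=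
          mul_le_mul_of_nonneg_right h3 (by positivity)
      _ = 2 * ψ / (1 - ψ) * (1 + 1 / m) * C := by
          field_simp

end
end
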